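/- Let G be a regular finite simple connected graph with d+1 distinct adjacency eigenvalues and girth g. If g ≥ 2d−1, then G is distance-regular. -/

import Mathlib

open Polynomial Finset

noncomputable section

namespace DRG

variable {V : Type*} [Fintype V] [DecidableEq V]

/-- The sphere of radius `i` around `u`: the set of vertices at distance `i` from `u`. -/
def sphere (G : SimpleGraph V) (u : V) (i : ℕ) : Finset V :=
  Finset.univ.filter (fun w => G.dist u w = i)

/-- The intersection parameter `c_i(u,v) = |S_{i-1}(u) ∩ S_1(v)|`. -/
def cNum (G : SimpleGraph V) (i : ℕ) (u v : V) : ℕ :=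
  (sphere G u (i - 1) ∩ sphere G v 1).card

/-- The intersection parameter `a_i(u,v) = |S_i(u) ∩ S_1(v)|`. -/
def aNum (G : SimpleGraph V) (i : ℕ) (u v : V) : ℕ :=
  (sphere G u i ∩ sphere G v 1).card

/-- The intersection parameter `b_i(u,v) = |S_{i+1}(u) ∩ S_1(v)|`. -/
def bNum (G : SimpleGraph V) (i : ℕ) (u v : V) : ℕ :=
  (sphere G u (i + 1) ∩ sphere G v 1).card

/-- A graph is distance-regular if for every `i` the numbers `c_i(u,v)`, `a_i(u,v)`,
`b_i(u,v)` do not depend on the pair of vertices `u, v` at distance `i`. -/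
def IsDistanceRegular (G : SimpleGraph V) : Prop :=
  ∀ i : ℕ, ∀ u v u' v' : V, G.dist u v = i → G.dist u' v' = i →
    cNum G i u v = cNum G i u' v' ∧ aNum G i u v = aNum G i u' v' ∧
      bNum G i u v = bNum G i u' v'

/-- The odd-girth of a graph: the length of a shortest odd cycle (`⊤` if none exists). -/
def oddGirth {W : Type*} (G : SimpleGraph W) : ℕ∞ :=
  ⨅ (v : W) (w : {w : G.Walk v v // w.IsCycle ∧ Odd w.length}), (w.1.length : ℕ∞)

/-- A generalized Odd graph: a distance-regular graph with diameter `D` and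
odd-girth `2D+1`. -/
def IsGeneralizedOddGraph (G : SimpleGraph V) : Prop :=
  IsDistanceRegular G ∧ oddGirth G = ((2 * G.diam + 1 : ℕ) : ℕ∞)

/-- The distance-`i` matrix of a graph. -/
def distMatrix (G : SimpleGraph V) (i : ℕ) : Matrix V V ℝ :=
  Matrix.of fun u v => if G.dist u v = i then (1 : ℝ) else 0

/-- The adjacency matrix of `G`, as an endomorphism of `V → ℝ`. -/
def adjEnd (G : SimpleGraph V) [DecidableRel G.Adj] : Module.End ℝ (V → ℝ) :=
  Matrix.toLin' (G.adjMatrix ℝ)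

/-- The multiplicity of `x` as an eigenvalue of the adjacency matrix of `G`. -/
def evMult (G : SimpleGraph V) [DecidableRel G.Adj] (x : ℝ) : ℕ :=
  Module.finrank ℝ (Module.End.eigenspace (adjEnd G) x)

/-- `G` has exactly `k` distinct adjacency eigenvalues. -/
def HasDistinctEigenvalues (G : SimpleGraph V) [DecidableRel G.Adj] (k : ℕ) : Prop :=
  ∃ s : Finset ℝ, s.card = k ∧ ∀ x : ℝ, x ∈ s ↔ Module.End.HasEigenvalue (adjEnd G) x

/-- The scalar product `⟨p,q⟩_G = (1/n) ∑_i m_i p(λ_i) q(λ_i)` associated to a graph `G`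
with distinct eigenvalues `lam 0 > lam 1 > ⋯ > lam d`. -/
def dotG (G : SimpleGraph V) [DecidableRel G.Adj] (d : ℕ) (lam : ℕ → ℝ)
    (p q : Polynomial ℝ) : ℝ :=
  (1 / (Fintype.card V : ℝ)) *
    ∑ i ∈ Finset.range (d + 1), (evMult G (lam i) : ℝ) * p.eval (lam i) * q.eval (lam i)

/-- The spectral data of a connected graph `G` with `d+1` distinct adjacency eigenvalues
`lam 0 > lam 1 > ⋯ > lam d`, together with its predistance polynomials `p 0, …, p d`
(of degree `i`, orthogonal w.r.t. `⟨·,·⟩_G`, normalized by `⟨p i, p i⟩_G = pᵢ(λ₀)`) and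
its preintersection numbers `alpha i`, `beta i`, `gamma i`, which are the coefficients
in the three-term recurrence `x pᵢ = βᵢ₋₁ pᵢ₋₁ + αᵢ pᵢ + γᵢ₊₁ pᵢ₊₁`
(with the conventions `p₋₁ = p_{d+1} = 0`, `β₋₁ = γ_{d+1} = 0`, `γ₀ = 0`, `β_d = 0`). -/
structure PreData (G : SimpleGraph V) [DecidableRel G.Adj] (d : ℕ) where
  lam : ℕ → ℝ
  lam_strictAnti : ∀ i j : ℕ, i < j → j ≤ d → lam j < lam i
  lam_hasEigen : ∀ i ≤ d, Module.End.HasEigenvalue (adjEnd G) (lam i)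
  lam_complete : ∀ x : ℝ, Module.End.HasEigenvalue (adjEnd G) x → ∃ i ≤ d, lam i = x
  p : ℕ → Polynomial ℝ
  alpha : ℕ → ℝ
  beta : ℕ → ℝ
  gamma : ℕ → ℝ
  p_degree : ∀ i ≤ d, (p i).degree = i
  p_orth : ∀ i ≤ d, ∀ j ≤ d, i ≠ j → dotG G d lam (p i) (p j) = 0
  p_norm : ∀ i ≤ d, dotG G d lam (p i) (p i) = (p i).eval (lam 0)
  gamma_zero : gamma 0 = 0
  beta_d : beta d = 0
  p_top : p (d + 1) = 0
  recur_zero : X * p 0 = C (alpha 0) * p 0 + C (gamma 1) * p 1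
  recur : ∀ i : ℕ, 1 ≤ i → i ≤ d →
    X * p i = C (beta (i - 1)) * p (i - 1) + C (alpha i) * p i + C (gamma (i + 1)) * p (i + 1)

/-- `G` is `m`-partially distance-regular (w.r.t. its predistance polynomials):
`pᵢ(A) = Aᵢ` for all `i ≤ m`. -/
def IsPartiallyDR (G : SimpleGraph V) [DecidableRel G.Adj] {d : ℕ}
    (pd : PreData G d) (m : ℕ) : Prop :=
  ∀ i ≤ m, Polynomial.aeval (G.adjMatrix ℝ) (pd.p i) = distMatrix G i

/-- The pairs of vertices at distance `i`. -/
def distPairs (G : SimpleGraph V) (i : ℕ) : Finset (V × V) :=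
  Finset.univ.filter (fun uv : V × V => G.dist uv.1 uv.2 = i)

/-- The average `c̄_i` of `c_i(u,v)` over all ordered pairs of vertices at distance `i`. -/
def avgC (G : SimpleGraph V) (i : ℕ) : ℝ :=
  (∑ uv ∈ distPairs G i, (cNum G i uv.1 uv.2 : ℝ)) / ((distPairs G i).card : ℝ)

/-- The average of `c_i(u,v)²` over all ordered pairs of vertices at distance `i`. -/
def avgC2 (G : SimpleGraph V) (i : ℕ) : ℝ :=
  (∑ uv ∈ distPairs G i, ((cNum G i uv.1 uv.2 : ℝ)) ^ 2) / ((distPairs G i).card : ℝ)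

/-- The average of `a_i(u,v)²` over all ordered pairs of vertices at distance `i`. -/
def avgA2 (G : SimpleGraph V) (i : ℕ) : ℝ :=
  (∑ uv ∈ distPairs G i, ((aNum G i uv.1 uv.2 : ℝ)) ^ 2) / ((distPairs G i).card : ℝ)

/-- The average of `a_i(u,v) · c_i(u,v)` over all ordered pairs at distance `i`. -/
def avgAC (G : SimpleGraph V) (i : ℕ) : ℝ :=
  (∑ uv ∈ distPairs G i, (aNum G i uv.1 uv.2 : ℝ) * (cNum G i uv.1 uv.2 : ℝ)) /
    ((distPairs G i).card : ℝ)

/-- The average number `k̄_i = (1/n) ∑_u |S_i(u)|` of vertices at distance `i`. -/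
def kbar (G : SimpleGraph V) (i : ℕ) : ℝ :=
  (∑ u : V, ((sphere G u i).card : ℝ)) / (Fintype.card V : ℝ)

end DRG

end

section AuxProof

open Polynomial Finset SimpleGraph Matrix

set_option linter.unusedSectionVars false

namespace DRGAux

variable {V : Type*} {G : SimpleGraph V}

private lemma path_closed_nil {v : V} (r : G.Walk v v) (hr : r.IsPath) : r.length = 0 := by
  cases r with
  | nil => rfl
  | cons h' r' =>
    rw [SimpleGraph.Walk.cons_isPath_iff] at hr
    exact absurd r'.end_mem_support hr.2

private lemma path_edge_start {b v : V} (r : G.Walk b v) (hr : r.IsPath)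
    (hbv : b ≠ v) (he : s(v, b) ∈ r.edges) : r.length = 1 := by
  cases r with
  | nil => simp at he
  | cons h' r' =>
    rename_i c
    rw [SimpleGraph.Walk.cons_isPath_iff] at hr
    rw [SimpleGraph.Walk.edges_cons, List.mem_cons] at he
    rcases he with he | he
    · rw [Sym2.eq_iff] at he
      rcases he with ⟨hv, hb⟩ | ⟨hv, _⟩
      · exact absurd hv.symm hbv
      · subst hv
        simp [path_closed_nil r' hr.1]
    · exact absurd (SimpleGraph.Walk.snd_mem_support_of_mem_edges r' he) hr.2

private lemma exists_cycle_of_odd_closed [DecidableEq V] :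
    ∀ (L : ℕ), Odd L → ∀ {v : V} (w : G.Walk v v), w.length = L →
      ∃ (a : V) (c : G.Walk a a), c.IsCycle ∧ c.length ≤ L := by
  intro L
  induction L using Nat.strong_induction_on with
  | _ L ih =>
    intro hL v w hw
    by_cases hnd : w.support.tail.Nodup
    · cases w with
      | nil =>
        simp only [SimpleGraph.Walk.length_nil] at hw
        rw [← hw] at hL; exact absurd hL (by decide)
      | cons h r =>
        rename_i b
        rw [SimpleGraph.Walk.support_cons, List.tail_cons] at hnd
        have hr : r.IsPath := SimpleGraph.Walk.IsPath.mk' hnd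
        by_cases hce : s(v, b) ∈ r.edges
        · have h1 : r.length = 1 := path_edge_start r hr (G.ne_of_adj h).symm hce
          rw [SimpleGraph.Walk.length_cons, h1] at hw
          rw [← hw] at hL
          exact absurd hL (by decide)
        · exact ⟨v, SimpleGraph.Walk.cons h r,
            (SimpleGraph.Walk.cons_isCycle_iff r h).mpr ⟨hr, hce⟩, hw.le⟩
    · rw [List.nodup_iff_count_le_one] at hnd
      push_neg at hnd
      obtain ⟨a, ha2⟩ := hnd
      have hamem : a ∈ w.support := List.mem_of_mem_tail (by
        exact List.count_pos_iff.mp (by omega))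
      set w' := w.rotate a hamem with hw'
      have hlen' : w'.length = L := by
        rw [hw', SimpleGraph.Walk.rotate]
        rw [SimpleGraph.Walk.length_append]
        have := congrArg SimpleGraph.Walk.length (w.take_spec hamem)
        rw [SimpleGraph.Walk.length_append] at this
        omega
      have hcount : 1 < w'.support.tail.count a :=
        ((SimpleGraph.Walk.support_rotate w a hamem).perm.count_eq a).symm ▸ ha2
      cases hw2 : w' with
      | nil => rw [hw2] at hlen'; simp at hlen'; rw [← hlen'] at hL; exact absurd hL (by decide)
      | cons h₂ r₂ =>
        rename_i b₂
        rw [hw2, SimpleGraph.Walk.support_cons, List.tail_cons] at hcount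
        have hmem : a ∈ r₂.support := List.count_pos_iff.mp (by omega)
        have hsplit := congrArg SimpleGraph.Walk.length (r₂.take_spec hmem)
        rw [SimpleGraph.Walk.length_append] at hsplit
        rw [hw2] at hlen'
        rw [SimpleGraph.Walk.length_cons] at hlen'
        have hdrop1 : 1 ≤ (r₂.dropUntil a hmem).length := by
          by_contra hh
          push_neg at hh
          interval_cases hdl : (r₂.dropUntil a hmem).length
          · have hnil : (r₂.dropUntil a hmem).Nil := SimpleGraph.Walk.nil_iff_length_eq.mpr hdl
            have hcnt : r₂.support.count a = 1 := by
              conv_lhs => rw [← r₂.take_spec hmem]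
              rw [SimpleGraph.Walk.support_append, List.count_append]
              rw [SimpleGraph.Walk.count_support_takeUntil_eq_one]
              cases hnn : r₂.dropUntil a hmem with
              | nil => simp
              | cons hx rx => rw [hnn] at hnil; simp at hnil
            omega
        set l₁ := (r₂.takeUntil a hmem).length + 1 with hl₁
        set l₂ := (r₂.dropUntil a hmem).length with hl₂
        have hsum : l₁ + l₂ = L := by omega
        rcases Nat.even_or_odd l₂ with he₂ | ho₂
        · have ho₁ : Odd l₁ := by
            rcases hL with ⟨m, hm⟩; rcases he₂ with ⟨m₂, hm₂⟩
            exact ⟨m - m₂, by omega⟩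
          have hlt : l₁ < L := by omega
          obtain ⟨a', c, hc, hcl⟩ := ih l₁ hlt ho₁
            (SimpleGraph.Walk.cons h₂ (r₂.takeUntil a hmem)) (by simp [hl₁])
          exact ⟨a', c, hc, by omega⟩
        · have hlt : l₂ < L := by omega
          obtain ⟨a', c, hc, hcl⟩ := ih l₂ hlt ho₂ (r₂.dropUntil a hmem) rfl
          exact ⟨a', c, hc, by omega⟩

private lemma exists_cycle_of_two_paths [DecidableEq V] {u v : V} (huv : u ≠ v)
    (p q : G.Walk u v) (hp : p.IsPath) (hq : q.IsPath) (hne : p ≠ q) :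
    ∃ (a : V) (c : G.Walk a a), c.IsCycle ∧ c.length ≤ p.length + q.length := by
  classical
  set s : Set (Sym2 V) := {e | e ∈ p.edges ∨ e ∈ q.edges} with hs
  set H : SimpleGraph V := SimpleGraph.fromEdgeSet s with hH
  have hsub : ∀ e ∈ H.edgeSet, e ∈ G.edgeSet := by
    intro e he
    rw [hH, SimpleGraph.edgeSet_fromEdgeSet] at he
    rcases he.1 with h1 | h1
    · exact p.edges_subset_edgeSet h1
    · exact q.edges_subset_edgeSet h1
  have hpe : ∀ e ∈ p.edges, e ∈ H.edgeSet := by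
    intro e he
    rw [hH, SimpleGraph.edgeSet_fromEdgeSet]
    exact ⟨Or.inl he, SimpleGraph.not_isDiag_of_mem_edgeSet G (p.edges_subset_edgeSet he)⟩
  have hqe : ∀ e ∈ q.edges, e ∈ H.edgeSet := by
    intro e he
    rw [hH, SimpleGraph.edgeSet_fromEdgeSet]
    exact ⟨Or.inr he, SimpleGraph.not_isDiag_of_mem_edgeSet G (q.edges_subset_edgeSet he)⟩
  have hne' : p.transfer H hpe ≠ q.transfer H hqe := by
    intro heq
    apply hne
    have := congrArg
      (fun w : H.Walk u v => w.transfer G (fun e he => hsub e (w.edges_subset_edgeSet he))) heq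
    simpa [SimpleGraph.Walk.transfer_transfer, SimpleGraph.Walk.transfer_self] using this
  have hnac : ¬ H.IsAcyclic := by
    intro hac
    have := hac.path_unique ⟨p.transfer H hpe, hp.transfer hpe⟩ ⟨q.transfer H hqe, hq.transfer hqe⟩
    exact hne' (congrArg Subtype.val this)
  simp only [SimpleGraph.IsAcyclic, not_forall, not_not] at hnac
  obtain ⟨a, c, hc⟩ := hnac
  refine ⟨a, c.transfer G (fun e he => hsub e (c.edges_subset_edgeSet he)), hc.transfer _, ?_⟩
  rw [SimpleGraph.Walk.length_transfer]
  have hmem : ∀ x ∈ c.support, x ∈ p.support ∨ x ∈ q.support := by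
    intro x hx
    have hadj : ∃ y, H.Adj x y := by
      obtain ⟨w1, w2, hw⟩ := SimpleGraph.Walk.mem_support_iff_exists_append.mp hx
      cases w2 with
      | cons h2 r2 => exact ⟨_, h2⟩
      | nil =>
        cases c with
        | nil => exact absurd rfl hc.ne_nil
        | cons h2 r2 => exact ⟨_, h2⟩
    obtain ⟨y, hy⟩ := hadj
    have : s(x, y) ∈ s := ((SimpleGraph.fromEdgeSet_adj s).mp hy).1
    rcases this with h1 | h1
    · exact Or.inl (p.fst_mem_support_of_mem_edges h1)
    · exact Or.inr (q.fst_mem_support_of_mem_edges h1)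
  have hsub2 : c.support.tail.toFinset ⊆ p.support.toFinset ∪ q.support.toFinset := by
    intro x hx
    rw [List.mem_toFinset] at hx
    rcases hmem x (List.mem_of_mem_tail hx) with h | h
    · exact Finset.mem_union_left _ (List.mem_toFinset.mpr h)
    · exact Finset.mem_union_right _ (List.mem_toFinset.mpr h)
  have hclen : c.length = c.support.tail.toFinset.card := by
    rw [List.toFinset_card_of_nodup hc.2]
    have := c.length_support
    simp [List.length_tail, this]
  have hcard : (p.support.toFinset ∪ q.support.toFinset).card ≤ p.length + q.length := by
    have h1 := Finset.card_union_add_card_inter p.support.toFinset q.support.toFinset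
    have h2 : ({u, v} : Finset V) ⊆ p.support.toFinset ∩ q.support.toFinset := by
      intro x hx
      simp only [Finset.mem_insert, Finset.mem_singleton] at hx
      rcases hx with rfl | rfl <;>
        simp [SimpleGraph.Walk.start_mem_support, SimpleGraph.Walk.end_mem_support]
    have h3 : 2 ≤ (p.support.toFinset ∩ q.support.toFinset).card := by
      have := Finset.card_le_card h2
      rwa [Finset.card_insert_of_notMem (by simp [huv]), Finset.card_singleton] at this
    have h4 : p.support.toFinset.card = p.length + 1 := by
      rw [List.toFinset_card_of_nodup hp.support_nodup, SimpleGraph.Walk.length_support]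
    have h5 : q.support.toFinset.card = q.length + 1 := by
      rw [List.toFinset_card_of_nodup hq.support_nodup, SimpleGraph.Walk.length_support]
    omega
  calc c.length = c.support.tail.toFinset.card := hclen
    _ ≤ _ := Finset.card_le_card hsub2
    _ ≤ _ := hcard

variable [Fintype V] [DecidableEq V] [DecidableRel G.Adj]

private lemma card_walks_of_lt_dist {u v : V} {l : ℕ} (h : l < G.dist u v) :
    Fintype.card {p : G.Walk u v // p.length = l} = 0 := by
  rw [Fintype.card_eq_zero_iff]
  constructor
  rintro ⟨p, hp⟩
  exact absurd (SimpleGraph.dist_le p) (by omega)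

private lemma card_walks_dist (hconn : G.Connected) {u v : V}
    (hgir : ∀ (a : V) (c : G.Walk a a), c.IsCycle → 2 * G.dist u v < c.length) :
    Fintype.card {p : G.Walk u v // p.length = G.dist u v} = 1 := by
  obtain ⟨p₀, hp₀⟩ := hconn.exists_walk_length_eq_dist u v
  rw [Fintype.card_eq_one_iff]
  refine ⟨⟨p₀, hp₀⟩, ?_⟩
  rintro ⟨q, hq⟩
  apply Subtype.ext
  by_cases huv : u = v
  · subst huv
    have hd : G.dist u u = 0 := SimpleGraph.dist_self
    have h1 : q.Nil := SimpleGraph.Walk.nil_iff_length_eq.mpr (by omega)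
    have h2 : p₀.Nil := SimpleGraph.Walk.nil_iff_length_eq.mpr (by omega)
    show q = p₀
    rw [h1.eq_nil, h2.eq_nil]
  · by_contra hne
    obtain ⟨a, c, hc, hcl⟩ := exists_cycle_of_two_paths huv q p₀
      (q.isPath_of_length_eq_dist hq) (p₀.isPath_of_length_eq_dist hp₀) hne
    rw [hq, hp₀] at hcl
    exact absurd hcl (not_le.mpr (by have := hgir a c hc; omega))

private lemma card_walks_parity (hconn : G.Connected) {u v : V} {l : ℕ}
    (hodd : Odd (l + G.dist u v))
    (hgir : ∀ (a : V) (c : G.Walk a a), c.IsCycle → l + G.dist u v < c.length) :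
    Fintype.card {p : G.Walk u v // p.length = l} = 0 := by
  rw [Fintype.card_eq_zero_iff]
  constructor
  rintro ⟨p, hp⟩
  obtain ⟨g, hg⟩ := hconn.exists_walk_length_eq_dist u v
  obtain ⟨a, c, hc, hcl⟩ := exists_cycle_of_odd_closed (l + G.dist u v) hodd
    (p.append g.reverse) (by simp [hp, hg])
  exact absurd hcl (not_le.mpr (hgir a c hc))

private lemma adjMatrix_isHermitian : (G.adjMatrix ℝ).IsHermitian := by
  ext i j
  simp [Matrix.conjTranspose_apply, SimpleGraph.adjMatrix_apply, SimpleGraph.adj_comm]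

private lemma aeval_prod_eigenvalues_eq_zero {s : Finset ℝ}
    (hs2 : ∀ x : ℝ, Module.End.HasEigenvalue (Matrix.toLin' (G.adjMatrix ℝ)) x → x ∈ s) :
    Polynomial.aeval (G.adjMatrix ℝ) (∏ μ ∈ s, (X - C μ)) = 0 := by
  have hA : (G.adjMatrix ℝ).IsHermitian := adjMatrix_isHermitian
  have hsymm := Matrix.isHermitian_iff_isSymmetric.mp hA
  set T := Matrix.toEuclideanLin (G.adjMatrix ℝ) with hT
  have htop : (⨆ μ : ℝ, Module.End.eigenspace T μ) = ⊤ :=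
    Submodule.orthogonal_eq_bot_iff.mp hsymm.orthogonalComplement_iSup_eigenspaces_eq_bot
  have hspec : ∀ μ : ℝ, Module.End.HasEigenvalue T μ → μ ∈ s := by
    intro μ hμ
    apply hs2
    rw [Module.End.hasEigenvalue_iff_mem_spectrum] at hμ ⊢
    have h1 : spectrum ℝ T = spectrum ℝ (G.adjMatrix ℝ) :=
      AlgEquiv.spectrum_eq (Matrix.toLinAlgEquiv (PiLp.basisFun 2 ℝ V)) (G.adjMatrix ℝ)
    have h2 : spectrum ℝ (Matrix.toLin' (G.adjMatrix ℝ)) = spectrum ℝ (G.adjMatrix ℝ) :=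
      AlgEquiv.spectrum_eq (Matrix.toLinAlgEquiv' : Matrix V V ℝ ≃ₐ[ℝ] _) (G.adjMatrix ℝ)
    rw [h2, ← h1]; exact hμ
  have hker : Polynomial.aeval T (∏ μ ∈ s, (X - C μ)) = 0 := by
    apply LinearMap.ext
    intro x
    have hx : x ∈ (⊤ : Submodule ℝ (EuclideanSpace ℝ V)) := Submodule.mem_top
    rw [← htop] at hx
    rw [LinearMap.zero_apply]
    refine Submodule.iSup_induction (motive := fun x =>
      (Polynomial.aeval T (∏ μ ∈ s, (X - C μ))) x = 0) _ hx ?_ (by simp) ?_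
    · intro μ x hx
      by_cases hx0 : x = 0
      · simp [hx0]
      · have hμs : μ ∈ s := hspec μ (Module.End.hasEigenvalue_of_hasEigenvector ⟨hx, hx0⟩)
        rw [← Finset.mul_prod_erase s _ hμs, mul_comm, _root_.map_mul]
        rw [Module.End.mul_apply]
        have : (Polynomial.aeval T (X - C μ)) x = 0 := by
          rw [map_sub, aeval_X, aeval_C]
          rw [Module.End.mem_eigenspace_iff] at hx
          simp [hx, Algebra.algebraMap_eq_smul_one]
        rw [this, map_zero]
    · intro x y hx hy
      rw [map_add, hx, hy, add_zero]
  have hEq : T = (Matrix.toLinAlgEquiv (PiLp.basisFun 2 ℝ V)) (G.adjMatrix ℝ) := rfl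
  rw [hEq] at hker
  rw [Polynomial.aeval_algEquiv, AlgHom.coe_comp, Function.comp_apply] at hker
  exact (map_eq_zero_iff _ (Matrix.toLinAlgEquiv (PiLp.basisFun 2 ℝ V)).injective).mp hker

private lemma hasEigenvalue_k [Nonempty V] {k : ℕ} (hreg : G.IsRegularOfDegree k) :
    Module.End.HasEigenvalue (Matrix.toLin' (G.adjMatrix ℝ)) (k : ℝ) := by
  apply Module.End.hasEigenvalue_of_hasEigenvector (x := fun _ => (1 : ℝ))
  constructor
  · rw [Module.End.mem_eigenspace_iff]
    ext u
    rw [Matrix.toLin'_apply]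
    simp only [SimpleGraph.adjMatrix_mulVec_apply]
    simp [hreg u]
  · intro h
    have := congrFun h (Classical.arbitrary V)
    simp at this

private lemma walk_const {k : ℕ} (hreg : G.IsRegularOfDegree k) {g : V → ℝ} {M : ℝ}
    (hmax : ∀ b, g b ≤ M)
    (hg : ∀ u, ∑ w ∈ G.neighborFinset u, g w = k * g u) :
    ∀ (x y : V) (_ : G.Walk x y), g x = M → g y = M := by
  have step : ∀ x y, G.Adj x y → g x = M → g y = M := by
    intro x y hadj hx
    by_contra hy
    have hylt : g y < M := lt_of_le_of_ne (hmax y) hy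
    have hlt : ∑ w ∈ G.neighborFinset x, g w < ∑ w ∈ G.neighborFinset x, M :=
      Finset.sum_lt_sum (fun i _ => hmax i) ⟨y, (G.mem_neighborFinset x y).mpr hadj, hylt⟩
    rw [hg x, Finset.sum_const, show #(G.neighborFinset x) = G.degree x from rfl, hreg x, hx,
      nsmul_eq_mul] at hlt
    exact lt_irrefl _ hlt
  intro x y p
  induction p with
  | nil => exact id
  | cons h p ih => exact fun hx => ih (step _ _ h hx)

private lemma matrix_entry_const {k : ℕ} (hconn : G.Connected) (hreg : G.IsRegularOfDegree k)
    {B : Matrix V V ℝ} (hsym : Bᵀ = B)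
    (hAB : G.adjMatrix ℝ * B = (k : ℝ) • B) :
    ∀ u v u' v', B u v = B u' v' := by
  have hcol : ∀ (v u u' : V), B u v = B u' v := by
    intro v u u'
    set g : V → ℝ := fun w => B w v with hgdef
    have hg : ∀ x, ∑ w ∈ G.neighborFinset x, g w = k * g x := by
      intro x
      have := congrFun (congrFun hAB x) v
      rw [SimpleGraph.adjMatrix_mul_apply] at this
      simpa [hgdef] using this
    obtain ⟨u₀, -, hmax⟩ := Finset.exists_max_image Finset.univ g ⟨u, Finset.mem_univ u⟩
    have hmax' : ∀ b, g b ≤ g u₀ := fun b => hmax b (Finset.mem_univ b)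
    have h1 : g u = g u₀ :=
      walk_const hreg hmax' hg u₀ u (hconn u₀ u).some rfl
    have h2 : g u' = g u₀ :=
      walk_const hreg hmax' hg u₀ u' (hconn u₀ u').some rfl
    rw [show B u v = g u from rfl, show B u' v = g u' from rfl, h1, h2]
  intro u v u' v'
  calc B u v = B u' v := hcol v u u'
    _ = Bᵀ v u' := rfl
    _ = B v u' := by rw [hsym]
    _ = B v' u' := hcol u' v v'
    _ = Bᵀ u' v' := rfl
    _ = B u' v' := by rw [hsym]

private lemma transpose_aeval {A : Matrix V V ℝ} (hA : Aᵀ = A) (p : ℝ[X]) :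
    (Polynomial.aeval A p)ᵀ = Polynomial.aeval A p := by
  rw [Polynomial.aeval_eq_sum_range]
  rw [Matrix.transpose_sum]
  congr 1
  ext j
  rw [Matrix.transpose_smul, Matrix.transpose_pow, hA]

variable {d : ℕ}

private lemma entry_eq_card (l : ℕ) (u v : V) :
    (G.adjMatrix ℝ ^ l) u v = (Fintype.card {p : G.Walk u v // p.length = l} : ℝ) := by
  rw [SimpleGraph.adjMatrix_pow_apply_eq_card_walk]
  rw [Nat.cast_inj]
  exact Fintype.card_congr' rfl

private lemma entry_zero_of_lt_dist {l : ℕ} {u v : V} (h : l < G.dist u v) :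
    (G.adjMatrix ℝ ^ l) u v = 0 := by
  rw [entry_eq_card, card_walks_of_lt_dist h, Nat.cast_zero]

private lemma entry_one (hconn : G.Connected)
    (hgir : ∀ (a : V) (c : G.Walk a a), c.IsCycle → 2 * d - 1 ≤ c.length)
    {u v : V} (hlt : 2 * G.dist u v < 2 * d - 1) :
    (G.adjMatrix ℝ ^ G.dist u v) u v = 1 := by
  rw [entry_eq_card, card_walks_dist hconn (fun a c hc => by have := hgir a c hc; omega),
    Nat.cast_one]

private lemma entry_zero_parity (hconn : G.Connected)
    (hgir : ∀ (a : V) (c : G.Walk a a), c.IsCycle → 2 * d - 1 ≤ c.length)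
    {u v : V} {l : ℕ} (hodd : Odd (l + G.dist u v)) (hlt : l + G.dist u v < 2 * d - 1) :
    (G.adjMatrix ℝ ^ l) u v = 0 := by
  rw [entry_eq_card, card_walks_parity hconn hodd (fun a c hc => by have := hgir a c hc; omega),
    Nat.cast_zero]

private lemma entry_pos_dist (hconn : G.Connected) (u v : V) :
    1 ≤ (G.adjMatrix ℝ ^ G.dist u v) u v := by
  rw [entry_eq_card]
  have : 0 < Fintype.card {p : G.Walk u v // p.length = G.dist u v} := by
    obtain ⟨p, hp⟩ := hconn.exists_walk_length_eq_dist u v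
    exact Fintype.card_pos_iff.mpr ⟨⟨p, hp⟩⟩
  exact_mod_cast this

private lemma dist_le_d (hconn : G.Connected) {s : Finset ℝ} (hcard : s.card = d + 1)
    (hann : Polynomial.aeval (G.adjMatrix ℝ) (∏ μ ∈ s, (X - C μ)) = 0) (u v : V) :
    G.dist u v ≤ d := by
  by_contra h
  push_neg at h
  set m := G.dist u v with hm
  set P : ℝ[X] := ∏ μ ∈ s, (X - C μ) with hP
  have hmonic : P.Monic := monic_prod_of_monic _ _ (fun μ _ => monic_X_sub_C μ)
  have hdegP : P.natDegree = d + 1 := by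
    rw [hP, natDegree_prod _ _ (fun μ _ => X_sub_C_ne_zero μ)]
    simp [natDegree_X_sub_C, hcard]
  have hP1 : P ≠ 1 := fun hh => by rw [hh] at hdegP; simp at hdegP
  have hdegr : (X ^ m %ₘ P).natDegree < d + 1 :=
    hdegP ▸ natDegree_modByMonic_lt _ hmonic hP1
  have hApow : (G.adjMatrix ℝ) ^ m = Polynomial.aeval (G.adjMatrix ℝ) (X ^ m %ₘ P) := by
    conv_lhs => rw [← aeval_X_pow (R := ℝ) (x := G.adjMatrix ℝ) (n := m)]
    conv_lhs => rw [← modByMonic_add_div (X ^ m : ℝ[X]) P]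
    rw [map_add, _root_.map_mul, hann, zero_mul, add_zero]
  have h0 : ((G.adjMatrix ℝ) ^ m) u v = 0 := by
    rw [hApow, aeval_eq_sum_range' hdegr, Matrix.sum_apply]
    apply Finset.sum_eq_zero
    intro j hj
    rw [Finset.mem_range] at hj
    rw [Matrix.smul_apply, entry_zero_of_lt_dist (by omega), smul_zero]
  have h1 := entry_pos_dist hconn u v
  rw [← hm] at h1
  rw [h0] at h1
  linarith

private lemma sphere_inter_eq (u v : V) (j : ℕ) :
    DRG.sphere G u j ∩ DRG.sphere G v 1 =
      (G.neighborFinset v).filter (fun w => G.dist u w = j) := by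
  ext w
  simp only [DRG.sphere, Finset.mem_inter, Finset.mem_filter, Finset.mem_univ, true_and,
    SimpleGraph.mem_neighborFinset, ← SimpleGraph.dist_eq_one_iff_adj]
  tauto

private lemma neighbor_dist (hconn : G.Connected) {v w : V} (hadj : G.Adj v w) (u : V) :
    G.dist u v - 1 ≤ G.dist u w ∧ G.dist u w ≤ G.dist u v + 1 := by
  have h1 : G.dist v w = 1 := SimpleGraph.dist_eq_one_iff_adj.mpr hadj
  have h2 : G.dist w v = 1 := SimpleGraph.dist_eq_one_iff_adj.mpr hadj.symm
  have t1 := hconn.dist_triangle (u := u) (v := v) (w := w)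
  have t2 := hconn.dist_triangle (u := u) (v := w) (w := v)
  omega

private lemma cNum_eq_entry (hconn : G.Connected)
    (hgir : ∀ (a : V) (c : G.Walk a a), c.IsCycle → 2 * d - 1 ≤ c.length)
    {u v : V} {j : ℕ} (hd : G.dist u v = j + 1) (hjd : j + 1 ≤ d) :
    ((DRG.cNum G (j + 1) u v : ℕ) : ℝ) = (G.adjMatrix ℝ ^ (j + 1)) u v := by
  rw [pow_succ, SimpleGraph.mul_adjMatrix_apply]
  have hterm : ∀ w ∈ G.neighborFinset v,
      (G.adjMatrix ℝ ^ j) u w = if G.dist u w = j then 1 else 0 := by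
    intro w hw
    have hb := neighbor_dist hconn ((G.mem_neighborFinset v w).mp hw) u
    rw [hd] at hb
    by_cases hcase : G.dist u w = j
    · rw [if_pos hcase, ← hcase]
      exact entry_one hconn hgir (by omega)
    · rw [if_neg hcase]
      exact entry_zero_of_lt_dist (by omega)
  rw [Finset.sum_congr rfl hterm, Finset.sum_boole]
  congr 1
  rw [DRG.cNum, Nat.add_sub_cancel, sphere_inter_eq]

private lemma aNum_eq_entry (hconn : G.Connected)
    (hgir : ∀ (a : V) (c : G.Walk a a), c.IsCycle → 2 * d - 1 ≤ c.length)
    {u v : V} {j : ℕ} (hd : G.dist u v = j + 1) (hjd : j + 2 ≤ d) :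
    ((DRG.aNum G (j + 1) u v : ℕ) : ℝ) = (G.adjMatrix ℝ ^ (j + 2)) u v := by
  rw [show j + 2 = (j + 1) + 1 from rfl, pow_succ, SimpleGraph.mul_adjMatrix_apply]
  have hterm : ∀ w ∈ G.neighborFinset v,
      (G.adjMatrix ℝ ^ (j + 1)) u w = if G.dist u w = j + 1 then 1 else 0 := by
    intro w hw
    have hb := neighbor_dist hconn ((G.mem_neighborFinset v w).mp hw) u
    rw [hd] at hb
    by_cases hcase : G.dist u w = j + 1
    · rw [if_pos hcase, ← hcase]
      exact entry_one hconn hgir (by omega)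
    · rw [if_neg hcase]
      rcases (by omega : G.dist u w = j ∨ G.dist u w = j + 2) with hj' | hj'
      · apply entry_zero_parity hconn hgir
        · rw [hj']; exact ⟨j, by ring⟩
        · rw [hj']; omega
      · exact entry_zero_of_lt_dist (by omega)
  rw [Finset.sum_congr rfl hterm, Finset.sum_boole]
  congr 1
  rw [DRG.aNum, sphere_inter_eq]

private lemma cab_partition (hconn : G.Connected) {k : ℕ} (hreg : G.IsRegularOfDegree k)
    {u v : V} {j : ℕ} (hd : G.dist u v = j + 1) :
    DRG.cNum G (j + 1) u v + DRG.aNum G (j + 1) u v + DRG.bNum G (j + 1) u v = k := by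
  rw [DRG.cNum, DRG.aNum, DRG.bNum, Nat.add_sub_cancel, sphere_inter_eq, sphere_inter_eq,
    sphere_inter_eq]
  simp only [show j + 1 + 1 = j + 2 from rfl]
  set N := G.neighborFinset v with hN
  have htri : ∀ w ∈ N, G.dist u w = j ∨ G.dist u w = j + 1 ∨ G.dist u w = j + 2 := by
    intro w hw
    have hb := neighbor_dist hconn ((G.mem_neighborFinset v w).mp hw) u
    rw [hd] at hb
    omega
  have hunion : N = (N.filter (fun w => G.dist u w = j)) ∪
      (N.filter (fun w => G.dist u w = j + 1)) ∪ (N.filter (fun w => G.dist u w = j + 2)) := by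
    ext w
    simp only [Finset.mem_union, Finset.mem_filter]
    constructor
    · intro hw
      rcases htri w hw with h | h | h <;> tauto
    · rintro ((⟨h, _⟩ | ⟨h, _⟩) | ⟨h, _⟩) <;> exact h
  have hd12 : Disjoint (N.filter (fun w => G.dist u w = j))
      (N.filter (fun w => G.dist u w = j + 1)) := by
    rw [Finset.disjoint_left]
    intro w h1 h2
    simp only [Finset.mem_filter] at h1 h2
    omega
  have hd3 : Disjoint ((N.filter (fun w => G.dist u w = j)) ∪
      (N.filter (fun w => G.dist u w = j + 1))) (N.filter (fun w => G.dist u w = j + 2)) := by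
    rw [Finset.disjoint_left]
    intro w h1 h2
    simp only [Finset.mem_union, Finset.mem_filter] at h1 h2
    rcases h1 with h | h <;> omega
  have hcards : #N = #(N.filter (fun w => G.dist u w = j)) +
      #(N.filter (fun w => G.dist u w = j + 1)) + #(N.filter (fun w => G.dist u w = j + 2)) := by
    conv_lhs => rw [hunion]
    rw [Finset.card_union_of_disjoint hd3, Finset.card_union_of_disjoint hd12]
  have hk : #N = k := hreg v
  omega

end DRGAux

end AuxProof


/-- A regular connected graph with `d+1` distinct eigenvalues and girth `g ≥ 2d-1` is
distance-regular. -/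
theorem statement2 {V : Type*} [Fintype V] [DecidableEq V] (G : SimpleGraph V)
    [DecidableRel G.Adj] (hconn : G.Connected) (k : ℕ) (hreg : G.IsRegularOfDegree k)
    (d : ℕ) (hev : DRG.HasDistinctEigenvalues G (d + 1))
    (hg : ((2 * d - 1 : ℕ) : ℕ∞) ≤ G.egirth) :
    DRG.IsDistanceRegular G := by
  classical
  have hnV : Nonempty V := hconn.nonempty
  obtain ⟨s, hcard, hmem⟩ := hev
  have hks : ((k : ℕ) : ℝ) ∈ s := (hmem _).mpr (DRGAux.hasEigenvalue_k hreg)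
  have hann : Polynomial.aeval (G.adjMatrix ℝ)
      (∏ μ ∈ s, (Polynomial.X - Polynomial.C μ)) = 0 :=
    DRGAux.aeval_prod_eigenvalues_eq_zero (fun x hx => (hmem x).mpr hx)
  have hgir : ∀ (a : V) (c : G.Walk a a), c.IsCycle → 2 * d - 1 ≤ c.length := by
    intro a c hc
    have h2 : (((2 * d - 1 : ℕ)) : ℕ∞) ≤ (c.length : ℕ∞) :=
      le_trans hg (SimpleGraph.le_egirth.mp le_rfl a c hc)
    exact_mod_cast h2
  have hdd : ∀ u v : V, G.dist u v ≤ d := DRGAux.dist_le_d hconn hcard hann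
  set q : Polynomial ℝ := ∏ μ ∈ s.erase ((k : ℕ) : ℝ), (Polynomial.X - Polynomial.C μ) with hq
  set B := Polynomial.aeval (G.adjMatrix ℝ) q with hB
  have hqmonic : q.Monic :=
    Polynomial.monic_prod_of_monic _ _ fun μ _ => Polynomial.monic_X_sub_C μ
  have hqdeg : q.natDegree = d := by
    rw [hq, Polynomial.natDegree_prod _ _ (fun μ _ => Polynomial.X_sub_C_ne_zero μ)]
    simp only [Polynomial.natDegree_X_sub_C, Finset.sum_const, smul_eq_mul, mul_one]
    rw [Finset.card_erase_of_mem hks, hcard]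
    omega
  have hfact : (Polynomial.X - Polynomial.C ((k : ℕ) : ℝ)) * q =
      ∏ μ ∈ s, (Polynomial.X - Polynomial.C μ) := by
    rw [hq]
    exact Finset.mul_prod_erase s (fun μ => Polynomial.X - Polynomial.C μ) hks
  have hABk : G.adjMatrix ℝ * B = ((k : ℕ) : ℝ) • B := by
    have h3 : Polynomial.aeval (G.adjMatrix ℝ)
        ((Polynomial.X - Polynomial.C ((k : ℕ) : ℝ)) * q) = 0 := by rw [hfact, hann]
    rw [_root_.map_mul, map_sub, Polynomial.aeval_X, Polynomial.aeval_C,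
      Algebra.algebraMap_eq_smul_one, sub_mul, sub_eq_zero, smul_mul_assoc, one_mul] at h3
    exact h3
  have hsym : Matrix.transpose B = B := DRGAux.transpose_aeval (by
    ext i j
    simp [Matrix.transpose_apply, SimpleGraph.adjMatrix_apply, SimpleGraph.adj_comm]) q
  have hconst := DRGAux.matrix_entry_const hconn hreg hsym hABk
  obtain ⟨x₀⟩ := hnV
  set γ : ℝ := B x₀ x₀ with hγ
  have hBγ : ∀ u v : V, B u v = γ := fun u v => hconst u v x₀ x₀
  have hAd : ∀ u v : V, (G.adjMatrix ℝ ^ d) u v =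
      γ - ∑ j ∈ Finset.range d, q.coeff j * (G.adjMatrix ℝ ^ j) u v := by
    intro u v
    have hexp : B = ∑ j ∈ Finset.range (d + 1), q.coeff j • G.adjMatrix ℝ ^ j := by
      rw [hB, Polynomial.aeval_eq_sum_range, hqdeg]
    have h5 : B u v = ∑ j ∈ Finset.range (d + 1), q.coeff j * (G.adjMatrix ℝ ^ j) u v := by
      rw [hexp, Matrix.sum_apply]
      exact Finset.sum_congr rfl fun j _ => rfl
    rw [Finset.sum_range_succ] at h5
    have hcoef : q.coeff d = 1 := by
      rw [← hqdeg]; exact hqmonic.coeff_natDegree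
    rw [hcoef, one_mul] at h5
    have h6 := hBγ u v
    linarith
  have hCd : ∀ u v : V, G.dist u v = d → (G.adjMatrix ℝ ^ d) u v = γ := by
    intro u v hd2
    rw [hAd]
    have hz : ∀ j ∈ Finset.range d, q.coeff j * (G.adjMatrix ℝ ^ j) u v = 0 := by
      intro j hj
      rw [Finset.mem_range] at hj
      rw [DRGAux.entry_zero_of_lt_dist (by omega), mul_zero]
    rw [Finset.sum_eq_zero hz, sub_zero]
  have hCd1 : ∀ u v : V, G.dist u v = d - 1 → 1 ≤ d →
      (G.adjMatrix ℝ ^ d) u v = γ - q.coeff (d - 1) := by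
    intro u v hd2 hd1
    rw [hAd]
    have hsum : ∑ j ∈ Finset.range d, q.coeff j * (G.adjMatrix ℝ ^ j) u v = q.coeff (d - 1) := by
      conv_lhs => rw [show d = (d - 1) + 1 by omega]
      rw [Finset.sum_range_succ]
      have hzero : ∀ j ∈ Finset.range (d - 1), q.coeff j * (G.adjMatrix ℝ ^ j) u v = 0 := by
        intro j hj
        rw [Finset.mem_range] at hj
        rw [DRGAux.entry_zero_of_lt_dist (by omega), mul_zero]
      rw [Finset.sum_eq_zero hzero, zero_add]
      have h1 : (G.adjMatrix ℝ ^ (d - 1)) u v = 1 := by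
        have := DRGAux.entry_one hconn hgir (u := u) (v := v) (by rw [hd2]; omega)
        rw [hd2] at this
        exact this
      rw [h1, mul_one]
    rw [hsum]
  intro i u v u' v' hduv hduv'
  rcases Nat.eq_zero_or_pos i with rfl | hi
  · have h1 : u = v := (hconn.dist_eq_zero_iff).mp hduv
    have h2 : u' = v' := (hconn.dist_eq_zero_iff).mp hduv'
    subst h1; subst h2
    have hcz : ∀ x : V, DRG.cNum G 0 x x = 0 := by
      intro x
      rw [DRG.cNum, Finset.card_eq_zero, Finset.eq_empty_iff_forall_notMem]
      intro w hw
      rw [Finset.mem_inter] at hw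
      simp only [DRG.sphere, Finset.mem_filter, Finset.mem_univ, true_and] at hw
      omega
    have haz : ∀ x : V, DRG.aNum G 0 x x = 0 := by
      intro x
      rw [DRG.aNum, Finset.card_eq_zero, Finset.eq_empty_iff_forall_notMem]
      intro w hw
      rw [Finset.mem_inter] at hw
      simp only [DRG.sphere, Finset.mem_filter, Finset.mem_univ, true_and] at hw
      omega
    have hbz : ∀ x : V, DRG.bNum G 0 x x = k := by
      intro x
      rw [DRG.bNum, zero_add, Finset.inter_self]
      have hsph : DRG.sphere G x 1 = G.neighborFinset x := by
        ext w
        simp only [DRG.sphere, Finset.mem_filter, Finset.mem_univ, true_and,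
          SimpleGraph.mem_neighborFinset]
        exact SimpleGraph.dist_eq_one_iff_adj
      rw [hsph]
      exact hreg x
    exact ⟨by rw [hcz u, hcz u'], by rw [haz u, haz u'], by rw [hbz u, hbz u']⟩
  · obtain ⟨j, rfl⟩ : ∃ j, i = j + 1 := ⟨i - 1, by omega⟩
    have hjd : j + 1 ≤ d := hduv ▸ hdd u v
    have hcR : ((DRG.cNum G (j + 1) u v : ℕ) : ℝ) = ((DRG.cNum G (j + 1) u' v' : ℕ) : ℝ) := by
      rw [DRGAux.cNum_eq_entry hconn hgir hduv hjd, DRGAux.cNum_eq_entry hconn hgir hduv' hjd]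
      rcases Nat.lt_or_ge (j + 1) d with hlt | hge
      · have e1 : (G.adjMatrix ℝ ^ (j + 1)) u v = 1 := by
          have := DRGAux.entry_one hconn hgir (u := u) (v := v) (by rw [hduv]; omega)
          rw [hduv] at this; exact this
        have e2 : (G.adjMatrix ℝ ^ (j + 1)) u' v' = 1 := by
          have := DRGAux.entry_one hconn hgir (u := u') (v := v') (by rw [hduv']; omega)
          rw [hduv'] at this; exact this
        rw [e1, e2]
      · have heq : j + 1 = d := le_antisymm hjd hge
        rw [heq, hCd u v (by omega), hCd u' v' (by omega)]
    have hcN : DRG.cNum G (j + 1) u v = DRG.cNum G (j + 1) u' v' := Nat.cast_injective hcR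
    have haN : DRG.aNum G (j + 1) u v = DRG.aNum G (j + 1) u' v' := by
      rcases Nat.lt_or_ge (j + 1) d with hlt | hge
      · have hj2 : j + 2 ≤ d := by omega
        have haR : ((DRG.aNum G (j + 1) u v : ℕ) : ℝ) =
            ((DRG.aNum G (j + 1) u' v' : ℕ) : ℝ) := by
          rw [DRGAux.aNum_eq_entry hconn hgir hduv hj2,
            DRGAux.aNum_eq_entry hconn hgir hduv' hj2]
          rcases Nat.lt_or_ge (j + 2) d with hlt2 | hge2
          · have e1 : (G.adjMatrix ℝ ^ (j + 2)) u v = 0 := by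
              apply DRGAux.entry_zero_parity hconn hgir
              · rw [hduv]; exact ⟨j + 1, by ring⟩
              · rw [hduv]; omega
            have e2 : (G.adjMatrix ℝ ^ (j + 2)) u' v' = 0 := by
              apply DRGAux.entry_zero_parity hconn hgir
              · rw [hduv']; exact ⟨j + 1, by ring⟩
              · rw [hduv']; omega
            rw [e1, e2]
          · have heq2 : j + 2 = d := le_antisymm hj2 hge2
            rw [heq2, hCd1 u v (by omega) (by omega), hCd1 u' v' (by omega) (by omega)]
        exact Nat.cast_injective haR
      · have heq : j + 1 = d := le_antisymm hjd hge
        have hb0 : ∀ x y : V, G.dist x y = j + 1 → DRG.bNum G (j + 1) x y = 0 := by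
          intro x y hxy
          rw [DRG.bNum, Finset.card_eq_zero, Finset.eq_empty_iff_forall_notMem]
          intro w hw
          rw [Finset.mem_inter] at hw
          simp only [DRG.sphere, Finset.mem_filter, Finset.mem_univ, true_and] at hw
          have := hdd x w
          omega
        have p1 := DRGAux.cab_partition hconn hreg hduv
        have p2 := DRGAux.cab_partition hconn hreg hduv'
        rw [hb0 u v hduv] at p1
        rw [hb0 u' v' hduv'] at p2
        omega
    have hbN : DRG.bNum G (j + 1) u v = DRG.bNum G (j + 1) u' v' := by
      have p1 := DRGAux.cab_partition hconn hreg hduv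
      have p2 := DRGAux.cab_partition hconn hreg hduv'
      omega
    exact ⟨hcN, haN, hbN⟩
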